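/- Let L > 0 and let f : ℝ → [0,∞] be convex, non-decreasing, with f(0) = 0, f finite and continuous on (-∞,1], f(p) = +∞ for p > 1, and f(1) > L. Set p_ℓ := min(sup{p ∈ ℝ : f(p) = L}, 1), q_ℓ := L/p_ℓ, q̄ := D⁺f(p_ℓ), and κ := (f ∨ ℓ_L)^♯. Then for q ≥ 0: D⁺κ(q) = 0 if 0 ≤ q < q_ℓ; D⁺κ(q) = p_ℓ if q_ℓ ≤ q < q̄; and D⁺κ(q) = D⁺f^♯(q) if q ≥ q̄. For q > 0: D⁻κ(q) = 0 if 0 < q ≤ q_ℓ; D⁻κ(q) = p_ℓ if q_ℓ < q ≤ q̄; and D⁻κ(q) = D⁻f^♯(q) if q > q̄. -/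

import Mathlib

open scoped Classical
noncomputable section

/-- Fenchel conjugate (Legendre transform) of an extended-real-valued function:
`fconj f q = sup_{p ∈ ℝ} (p*q - f p)`. -/
def fconj (f : ℝ → EReal) (q : ℝ) : EReal := ⨆ p : ℝ, ((p * q : ℝ) : EReal) - f p

/-- Convexity for extended-real-valued functions on `ℝ`. -/
def ConvexE (f : ℝ → EReal) : Prop :=
  ∀ x y t : ℝ, 0 ≤ t → t ≤ 1 →
    f (t * x + (1 - t) * y) ≤ (t : EReal) * f x + ((1 - t : ℝ) : EReal) * f y

/-- The payoff function `ℓ_L`: `0` for `p ≤ 0`, `L` for `0 < p ≤ 1`, `+∞` for `p > 1`. -/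
def ellL (L : ℝ) (p : ℝ) : EReal :=
  if p ≤ 0 then 0 else if p ≤ 1 then (L : EReal) else ⊤

/-- Right derivative (as an extended real) of `f` at `p`, i.e. the infimum of the
right slopes `(f (p+h) - f p)/h` over `h > 0`. -/
def rightDE (f : ℝ → EReal) (p : ℝ) : EReal :=
  ⨅ h : {h : ℝ // 0 < h}, ((h.1⁻¹ : ℝ) : EReal) * (f (p + h.1) - f p)

/-- Left derivative (as an extended real) of `f` at `p`, i.e. the supremum of the
left slopes `(f p - f (p-h))/h` over `h > 0`. -/
def leftDE (f : ℝ → EReal) (p : ℝ) : EReal :=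
  ⨆ h : {h : ℝ // 0 < h}, ((h.1⁻¹ : ℝ) : EReal) * (f p - f (p - h.1))

/-- Closed convex envelope of `f`: the pointwise supremum of all lower semicontinuous
convex minorants of `f` (the largest closed convex function majorized by `f`). -/
def coE (f : ℝ → EReal) (p : ℝ) : EReal :=
  ⨆ g : {g : ℝ → EReal // ConvexE g ∧ LowerSemicontinuous g ∧ ∀ x, g x ≤ f x}, g.1 p

/-- Subdifferential of an extended-real-valued function at a point. -/
def subdiffE (f : ℝ → EReal) (p : ℝ) : Set ℝ :=
  {q : ℝ | ∀ r : ℝ, f p + ((q * (r - p) : ℝ) : EReal) ≤ f r}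


lemma ne_bot_of_nonneg' {x : EReal} (hx : 0 ≤ x) : x ≠ ⊥ :=
  fun h => by rw [h] at hx; exact absurd hx (by simp)

/-- chord slope on the left is at most any right slope, for convex `f`. -/
lemma chord_le_rightslope' (f : ℝ → EReal) (hconv : ConvexE f) (hpos : ∀ p, 0 ≤ f p)
    (a b : ℝ) (hab : a < b) (Fa Fb : ℝ) (ha : f a = (Fa : EReal)) (hb : f b = (Fb : EReal))
    (h : ℝ) (hh : 0 < h) :
    (((Fb - Fa) / (b - a) : ℝ) : EReal) ≤ ((h⁻¹ : ℝ) : EReal) * (f (b + h) - f b) := by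
  by_cases hT : f (b + h) = ⊤
  · rw [hT, hb, EReal.top_sub_coe, EReal.coe_mul_top_of_pos (by positivity)]
    exact le_top
  · set Fc : ℝ := (f (b + h)).toReal with hFc
    have hc : f (b + h) = (Fc : EReal) := (EReal.coe_toReal hT (ne_bot_of_nonneg' (hpos _))).symm
    have hd : (0:ℝ) < b - a := by linarith
    set t : ℝ := h / (b - a + h) with ht
    have hden : (0:ℝ) < b - a + h := by linarith
    have ht0 : 0 ≤ t := by positivity
    have ht1 : t ≤ 1 := by rw [ht, div_le_one hden]; linarith
    have harg : t * a + (1 - t) * (b + h) = b := by rw [ht]; field_simp; ring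
    have := hconv a (b + h) t ht0 ht1
    rw [harg, ha, hc, ← EReal.coe_mul, ← EReal.coe_mul, ← EReal.coe_add, hb,
      EReal.coe_le_coe_iff] at this
    rw [hc, hb, ← EReal.coe_sub, ← EReal.coe_mul, EReal.coe_le_coe_iff]
    rw [div_le_iff₀ hd]
    rw [ht] at this
    have h2 : Fb * (b - a + h) ≤ h * Fa + (b - a) * Fc := by
      have := mul_le_mul_of_nonneg_right this hden.le
      calc Fb * (b - a + h) ≤ (h / (b - a + h) * Fa + (1 - h / (b - a + h)) * Fc) * (b - a + h) := this
        _ = h * Fa + (b - a) * Fc := by field_simp; ring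
    rw [show h⁻¹ * (Fc - Fb) * (b - a) = (Fc - Fb) * (b - a) / h by ring, le_div_iff₀ hh]
    linarith [h2]

/-- **Proof of Lemma 3.2** (one-sided derivatives of `κ := (f ∨ ℓ_L)^♯` in the case
`L > 0 < f 1 - L`): with `p_ℓ := min(sup{p : f p = L},1)`, `q_ℓ := L/p_ℓ` and
`q̄ := D⁺f(p_ℓ)`, for `q ≥ 0` the right derivative of `κ` is `0` on `[0,q_ℓ)`, `p_ℓ` on
`[q_ℓ, q̄)` and `D⁺f^♯(q)` on `[q̄,∞)`; for `q > 0` the left derivative of `κ` is `0` on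
`(0,q_ℓ]`, `p_ℓ` on `(q_ℓ, q̄]` and `D⁻f^♯(q)` on `(q̄,∞)`. -/
theorem one_sided_derivs_conj_max_ellL
    (L : ℝ) (hL : 0 < L) (f : ℝ → EReal)
    (hpos : ∀ p, 0 ≤ f p) (hconv : ConvexE f) (hmono : Monotone f) (hf0 : f 0 = 0)
    (hfin : ∀ p : ℝ, p ≤ 1 → f p ≠ ⊤) (hcont : ContinuousOn f (Set.Iic 1))
    (htop : ∀ p : ℝ, 1 < p → f p = ⊤) (hf1 : (L : EReal) < f 1)
    (pℓ qℓ : ℝ)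
    (hpℓ : pℓ = min (sSup {p : ℝ | f p = (L : EReal)}) 1)
    (hqℓ : qℓ = L / pℓ) :
    (∀ q : ℝ, 0 ≤ q →
      (q < qℓ → rightDE (fconj (fun p => max (f p) (ellL L p))) q = 0) ∧
      (qℓ ≤ q → (q : EReal) < rightDE f pℓ →
        rightDE (fconj (fun p => max (f p) (ellL L p))) q = (pℓ : EReal)) ∧
      (rightDE f pℓ ≤ (q : EReal) →
        rightDE (fconj (fun p => max (f p) (ellL L p))) q = rightDE (fconj f) q)) ∧
    (∀ q : ℝ, 0 < q →
      (q ≤ qℓ → leftDE (fconj (fun p => max (f p) (ellL L p))) q = 0) ∧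
      (qℓ < q → (q : EReal) ≤ rightDE f pℓ →
        leftDE (fconj (fun p => max (f p) (ellL L p))) q = (pℓ : EReal)) ∧
      (rightDE f pℓ < (q : EReal) →
        leftDE (fconj (fun p => max (f p) (ellL L p))) q = leftDE (fconj f) q)) := by
  
  classical
  set g : ℝ → EReal := fun p => max (f p) (ellL L p) with hgdef
  have hfbot : ∀ p, f p ≠ ⊥ := fun p => ne_bot_of_nonneg' (hpos p)
  have hfneg : ∀ p : ℝ, p ≤ 0 → f p = 0 := fun p hp => le_antisymm (hf0 ▸ hmono hp) (hpos p)
  -- existence of a point where f = L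
  have hivt : (L : EReal) ∈ f '' Set.Icc (0:ℝ) 1 := by
    apply intermediate_value_Icc zero_le_one (hcont.mono Set.Icc_subset_Iic_self)
    refine ⟨?_, hf1.le⟩
    rw [hf0]
    exact_mod_cast hL.le
  obtain ⟨p₀, hp₀mem, hp₀⟩ := hivt
  set S := {p : ℝ | f p = (L : EReal)} with hSdef
  have hp₀S : p₀ ∈ S := hp₀
  have hSne : S.Nonempty := ⟨p₀, hp₀S⟩
  have hS_le_one : ∀ p ∈ S, p ≤ 1 := by
    intro p hp
    by_contra hc
    push_neg at hc
    have : f p = (L : EReal) := hp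
    rw [htop p hc] at this
    exact absurd this.symm (by simp)
  have hSbdd : BddAbove S := ⟨1, fun p hp => hS_le_one p hp⟩
  have hsup_le_one : sSup S ≤ 1 := csSup_le hSne hS_le_one
  have hplS : pℓ = sSup S := by rw [hpℓ]; exact min_eq_left hsup_le_one
  have hp₀pos : 0 < p₀ := by
    by_contra hc
    push_neg at hc
    rw [hfneg p₀ hc] at hp₀
    have : (0:ℝ) = L := by exact_mod_cast hp₀
    linarith
  have hp₀le : p₀ ≤ pℓ := hplS ▸ le_csSup hSbdd hp₀S
  have hplpos : 0 < pℓ := lt_of_lt_of_le hp₀pos hp₀le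
  have hpl_le_one : pℓ ≤ 1 := hpℓ ▸ min_le_right _ _
  have hfpl_ge : (L : EReal) ≤ f pℓ := hp₀ ▸ hmono hp₀le
  have hfpl_le : f pℓ ≤ (L : EReal) := by
    by_contra hc
    push_neg at hc
    have hcw : ContinuousWithinAt f (Set.Iic 1) pℓ := hcont pℓ hpl_le_one
    have hev : ∀ᶠ x in nhdsWithin pℓ (Set.Iic 1), (L:EReal) < f x :=
      hcw.eventually (eventually_gt_nhds hc)
    have hev2 : ∀ᶠ x in nhdsWithin pℓ (Set.Iic pℓ), (L:EReal) < f x :=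
      hev.filter_mono (nhdsWithin_mono _ (Set.Iic_subset_Iic.mpr hpl_le_one))
    obtain ⟨l, hl, hsub⟩ := mem_nhdsLE_iff_exists_Ioc_subset.mp hev2
    obtain ⟨s, hsS, hls⟩ := exists_lt_of_lt_csSup hSne (hplS ▸ hl)
    have hspl : s ≤ pℓ := hplS ▸ le_csSup hSbdd hsS
    have h1 : (L:EReal) < f s := hsub ⟨hls, hspl⟩
    have h2 : f s = (L:EReal) := hsS
    rw [h2] at h1
    exact lt_irrefl _ h1
  have hfpl : f pℓ = (L:EReal) := le_antisymm hfpl_le hfpl_ge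
  have hpl_lt_one : pℓ < 1 := by
    have hcw : ContinuousWithinAt f (Set.Iic 1) 1 := hcont 1 (Set.mem_Iic.mpr le_rfl)
    have hev : ∀ᶠ x in nhdsWithin (1:ℝ) (Set.Iic 1), (L:EReal) < f x :=
      hcw.eventually (eventually_gt_nhds hf1)
    obtain ⟨l, hl, hsub⟩ := mem_nhdsLE_iff_exists_Ioc_subset.mp hev
    have hSl : ∀ p ∈ S, p ≤ l := by
      intro p hp
      by_contra hc
      push_neg at hc
      have h1 : (L:EReal) < f p := hsub ⟨hc, hS_le_one p hp⟩
      have h2 : f p = (L:EReal) := hp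
      rw [h2] at h1
      exact lt_irrefl _ h1
    calc pℓ = sSup S := hplS
      _ ≤ l := csSup_le hSne hSl
      _ < 1 := hl
  have hql_pos : 0 < qℓ := hqℓ ▸ div_pos hL hplpos
  have hqlpl : pℓ * qℓ = L := by rw [hqℓ]; field_simp
  -- facts about g
  have hg0 : ∀ p : ℝ, p ≤ 0 → g p = 0 := fun p hp => by
    simp only [hgdef, ellL, if_pos hp, hfneg p hp, max_self]
  have hgL : ∀ p : ℝ, 0 < p → p ≤ pℓ → g p = (L:EReal) := fun p hp1 hp2 => by
    have h1 : ¬ p ≤ 0 := not_le.mpr hp1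
    have h2 : p ≤ 1 := le_trans hp2 hpl_le_one
    have h3 : f p ≤ (L:EReal) := hfpl ▸ hmono hp2
    simp only [hgdef, ellL, if_neg h1, if_pos h2]
    exact max_eq_right h3
  have hgf : ∀ p : ℝ, pℓ ≤ p → g p = f p := fun p hp => by
    by_cases h2 : p ≤ 1
    · have h1 : ¬ p ≤ 0 := not_le.mpr (lt_of_lt_of_le hplpos hp)
      simp only [hgdef, ellL, if_neg h1, if_pos h2]
      exact max_eq_left (hfpl ▸ hmono hp)
    · push_neg at h2
      have h1 : ¬ p ≤ 0 := by linarith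
      simp only [hgdef, ellL, if_neg h1, if_neg (not_le.mpr h2), htop p h2]
      exact max_eq_left le_top
  have hgpl : g pℓ = (L:EReal) := hgL pℓ hplpos le_rfl
  have hfg : ∀ p, f p ≤ g p := fun p => le_max_left _ _
  -- conjugate generalities
  have hterm : ∀ (φ : ℝ → EReal) (q p : ℝ), ((p*q:ℝ):EReal) - φ p ≤ fconj φ q :=
    fun φ q p => le_iSup (fun p => ((p*q:ℝ):EReal) - φ p) p
  have hFY : ∀ x : ℝ, ((pℓ * x - L : ℝ) : EReal) ≤ fconj g x := fun x => by
    have := hterm g x pℓ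
    rw [hgpl, ← EReal.coe_sub] at this
    exact this
  have hknn : ∀ x : ℝ, 0 ≤ fconj g x := fun x => by
    have := hterm g x 0
    rw [hg0 0 le_rfl] at this
    simpa using this
  have hKleF : ∀ x : ℝ, fconj g x ≤ fconj f x :=
    fun x => iSup_le fun p => le_trans (EReal.sub_le_sub le_rfl (hfg p)) (hterm f x p)
  have hFle : ∀ q : ℝ, 0 ≤ q → fconj f q ≤ (q : EReal) := fun q hq => iSup_le fun p => by
    by_cases hp : p ≤ 1
    · have hFp : f p = ((f p).toReal : EReal) := (EReal.coe_toReal (hfin p hp) (hfbot p)).symm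
      have hFp0 : 0 ≤ (f p).toReal := by
        have := EReal.toReal_le_toReal (hpos p) (by simp) (hfin p hp)
        simpa using this
      rw [hFp, ← EReal.coe_sub, EReal.coe_le_coe_iff]
      nlinarith [mul_nonneg hq (sub_nonneg.mpr hp)]
    · push_neg at hp
      rw [htop p hp, EReal.sub_top]
      exact bot_le
  have hcpos : ∀ h : {h : ℝ // 0 < h}, (0:EReal) ≤ ((h.1⁻¹:ℝ):EReal) :=
    fun h => by exact_mod_cast le_of_lt (inv_pos.mpr h.2)
  have hcoesub : ∀ (h a b : ℝ),
      ((h⁻¹:ℝ):EReal) * (((a:ℝ):EReal) - ((b:ℝ):EReal)) = ((h⁻¹*(a-b):ℝ):EReal) :=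
    fun h a b => by rw [← EReal.coe_sub, ← EReal.coe_mul]
  have hRDef : ∀ (φ : ℝ → EReal) (x : ℝ), rightDE φ x =
      ⨅ h : {h : ℝ // 0 < h}, ((h.1⁻¹:ℝ):EReal) * (φ (x + h.1) - φ x) := fun _ _ => rfl
  have hLDef : ∀ (φ : ℝ → EReal) (x : ℝ), leftDE φ x =
      ⨆ h : {h : ℝ // 0 < h}, ((h.1⁻¹:ℝ):EReal) * (φ x - φ (x - h.1)) := fun _ _ => rfl
  -- bounds on q̄ := rightDE f pℓ
  have hqbar_ge : (qℓ : EReal) ≤ rightDE f pℓ := by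
    rw [hRDef]
    refine le_iInf fun h => ?_
    have hch := chord_le_rightslope' f hconv hpos 0 pℓ hplpos 0 L
      (by rw [hf0]; norm_num) hfpl h.1 h.2
    have e : ((L - 0) / (pℓ - 0) : ℝ) = qℓ := by rw [hqℓ]; ring
    rw [e] at hch
    exact hch
  have hF1 : f 1 = ((f 1).toReal : EReal) := (EReal.coe_toReal (hfin 1 le_rfl) (hfbot 1)).symm
  have hqbar_le : rightDE f pℓ ≤ (((1 - pℓ)⁻¹ * ((f 1).toReal - L) : ℝ) : EReal) := by
    have e : ((((1 - pℓ)⁻¹:ℝ)):EReal) * (f (pℓ + (1 - pℓ)) - f pℓ) =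
        (((1 - pℓ)⁻¹ * ((f 1).toReal - L) : ℝ) : EReal) := by
      rw [show pℓ + (1 - pℓ) = 1 by ring, hfpl, hF1, hcoesub, EReal.toReal_coe]
    exact le_trans (iInf_le (fun h : {h : ℝ // 0 < h} =>
      ((h.1⁻¹:ℝ):EReal) * (f (pℓ + h.1) - f pℓ)) ⟨1 - pℓ, sub_pos.mpr hpl_lt_one⟩)
      (le_of_eq e)
  have hqbar_top : rightDE f pℓ ≠ ⊤ :=
    ne_top_of_le_ne_top (EReal.coe_ne_top _) hqbar_le
  have hqbar_bot : rightDE f pℓ ≠ ⊥ := by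
    intro hb
    rw [hb] at hqbar_ge
    exact absurd hqbar_ge (by simp)
  set qb : ℝ := (rightDE f pℓ).toReal with hqbdef
  have hqb : rightDE f pℓ = (qb : EReal) := (EReal.coe_toReal hqbar_top hqbar_bot).symm
  have hql_le_qb : qℓ ≤ qb := by
    rw [hqb] at hqbar_ge
    exact_mod_cast hqbar_ge
  have hqb_pos : 0 < qb := lt_of_lt_of_le hql_pos hql_le_qb
  -- slope bounds
  have hSL3 : ∀ p : ℝ, pℓ < p → p ≤ 1 → L + (p - pℓ) * qb ≤ (f p).toReal := by
    intro p h1 h2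
    have hFp : f p = ((f p).toReal : EReal) := (EReal.coe_toReal (hfin p h2) (hfbot p)).symm
    have e : ((((p - pℓ)⁻¹:ℝ)):EReal) * (f (pℓ + (p - pℓ)) - f pℓ) =
        (((p - pℓ)⁻¹ * ((f p).toReal - L) : ℝ) : EReal) := by
      rw [show pℓ + (p - pℓ) = p by ring, hfpl, hFp, hcoesub, EReal.toReal_coe]
    have hle : rightDE f pℓ ≤ (((p - pℓ)⁻¹ * ((f p).toReal - L) : ℝ) : EReal) :=
      le_trans (iInf_le (fun h : {h : ℝ // 0 < h} =>
        ((h.1⁻¹:ℝ):EReal) * (f (pℓ + h.1) - f pℓ)) ⟨p - pℓ, sub_pos.mpr h1⟩) (le_of_eq e)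
    rw [hqb, EReal.coe_le_coe_iff] at hle
    have this := hle
    have hd : (0:ℝ) < p - pℓ := sub_pos.mpr h1
    have := mul_le_mul_of_nonneg_left this hd.le
    rw [show (p - pℓ) * ((p - pℓ)⁻¹ * ((f p).toReal - L)) = (f p).toReal - L by field_simp] at this
    linarith
  have hSL2 : ∀ p : ℝ, p < pℓ → L - (f p).toReal ≤ (pℓ - p) * qb := by
    intro p h1
    have hp1 : p ≤ 1 := le_trans h1.le hpl_le_one
    have hFp : f p = ((f p).toReal : EReal) := (EReal.coe_toReal (hfin p hp1) (hfbot p)).symm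
    have hch : (((L - (f p).toReal) / (pℓ - p) : ℝ) : EReal) ≤ rightDE f pℓ := by
      rw [hRDef]
      refine le_iInf fun h => ?_
      exact chord_le_rightslope' f hconv hpos p pℓ h1 _ L hFp hfpl h.1 h.2
    rw [hqb, EReal.coe_le_coe_iff] at hch
    have hd : (0:ℝ) < pℓ - p := sub_pos.mpr h1
    have := mul_le_mul_of_nonneg_left hch hd.le
    rw [show (pℓ - p) * ((L - (f p).toReal) / (pℓ - p)) = L - (f p).toReal by field_simp] at this
    linarith
  -- explicit formula for fconj g on [0, qb]
  have hKform : ∀ q : ℝ, 0 ≤ q → q ≤ qb → fconj g q = max 0 ((pℓ*q - L : ℝ):EReal) := by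
    intro q hq0 hqle
    refine le_antisymm (iSup_le fun p => ?_) (max_le (hknn q) (hFY q))
    rcases le_or_gt p 0 with hp | hp
    · rw [hg0 p hp, sub_zero]
      refine le_trans ?_ (le_max_left _ _)
      exact_mod_cast mul_nonpos_of_nonpos_of_nonneg hp hq0
    rcases le_or_gt p pℓ with hp2 | hp2
    · rw [hgL p hp hp2, ← EReal.coe_sub]
      refine le_trans ?_ (le_max_right _ _)
      exact EReal.coe_le_coe_iff.mpr (by nlinarith)
    rcases le_or_gt p 1 with hp3 | hp3
    · have hFp : f p = ((f p).toReal : EReal) := (EReal.coe_toReal (hfin p hp3) (hfbot p)).symm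
      have hsl := hSL3 p hp2 hp3
      rw [hgf p hp2.le, hFp, ← EReal.coe_sub]
      refine le_trans ?_ (le_max_right _ _)
      apply EReal.coe_le_coe_iff.mpr
      nlinarith [sub_pos.mpr hp2]
    · rw [hgf p (by linarith), htop p hp3, EReal.sub_top]
      exact bot_le
  have hK0 : ∀ q : ℝ, 0 ≤ q → q ≤ qℓ → fconj g q = 0 := fun q h0 h1 => by
    rw [hKform q h0 (le_trans h1 hql_le_qb), max_eq_left]
    exact_mod_cast (by nlinarith : pℓ*q - L ≤ 0)
  have hKlin : ∀ q : ℝ, qℓ ≤ q → q ≤ qb → fconj g q = ((pℓ*q - L:ℝ):EReal) := fun q h0 h1 => by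
    rw [hKform q (le_trans hql_pos.le h0) h1, max_eq_right]
    exact_mod_cast (by nlinarith : (0:ℝ) ≤ pℓ*q - L)
  have hKF : ∀ q : ℝ, qb ≤ q → fconj g q = fconj f q := fun q hq => by
    refine le_antisymm (hKleF q) (iSup_le fun p => ?_)
    rcases le_or_gt pℓ p with hp | hp
    · rw [← hgf p hp]
      exact hterm g q p
    · have hp1 : p ≤ 1 := le_trans hp.le hpl_le_one
      have hFp : f p = ((f p).toReal : EReal) := (EReal.coe_toReal (hfin p hp1) (hfbot p)).symm
      have hsl := hSL2 p hp
      refine le_trans ?_ (hFY q)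
      rw [hFp, ← EReal.coe_sub]
      apply EReal.coe_le_coe_iff.mpr
      have hd : (0:ℝ) < pℓ - p := sub_pos.mpr hp
      nlinarith [mul_le_mul_of_nonneg_left hq hd.le]
  -- main goals
  refine ⟨fun q hq => ⟨?_, ?_, ?_⟩, fun q hq => ⟨?_, ?_, ?_⟩⟩
  · -- right derivative, q < qℓ
    intro hlt
    rw [hRDef]
    refine le_antisymm ?_ (le_iInf fun h => ?_)
    · have e : (((qℓ - q)⁻¹:ℝ):EReal) * (fconj g (q + (qℓ - q)) - fconj g q) = 0 := by
        rw [show q + (qℓ - q) = qℓ by ring, hK0 qℓ hql_pos.le le_rfl, hK0 q hq hlt.le,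
          sub_zero, mul_zero]
      exact le_trans (iInf_le _ ⟨qℓ - q, sub_pos.mpr hlt⟩) (le_of_eq e)
    · rw [hK0 q hq hlt.le, sub_zero]
      exact mul_nonneg (hcpos h) (hknn _)
  · -- right derivative, qℓ ≤ q < qb
    intro hge hlt
    rw [hqb, EReal.coe_lt_coe_iff] at hlt
    rw [hRDef]
    refine le_antisymm ?_ (le_iInf fun h => ?_)
    · have hne : qb - q ≠ 0 := ne_of_gt (sub_pos.mpr hlt)
      have e : (((qb - q)⁻¹:ℝ):EReal) * (fconj g (q + (qb - q)) - fconj g q) = (pℓ:EReal) := by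
        rw [show q + (qb - q) = qb by ring, hKlin qb hql_le_qb le_rfl, hKlin q hge hlt.le,
          hcoesub]
        have e2 : (qb - q)⁻¹ * (pℓ*qb - L - (pℓ*q - L)) = pℓ := by field_simp; ring
        exact_mod_cast e2
      exact le_trans (iInf_le _ ⟨qb - q, sub_pos.mpr hlt⟩) (le_of_eq e)
    · rw [hKlin q hge hlt.le]
      calc (pℓ:EReal) = ((h.1⁻¹ * ((pℓ*(q+h.1) - L) - (pℓ*q - L)):ℝ):EReal) := by
            have hne : h.1 ≠ 0 := ne_of_gt h.2
            have e2 : h.1⁻¹ * ((pℓ*(q+h.1) - L) - (pℓ*q - L)) = pℓ := by field_simp; ring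
            exact_mod_cast e2.symm
        _ = ((h.1⁻¹:ℝ):EReal) * (((pℓ*(q+h.1) - L:ℝ):EReal) - ((pℓ*q - L:ℝ):EReal)) :=
            (hcoesub _ _ _).symm
        _ ≤ ((h.1⁻¹:ℝ):EReal) * (fconj g (q+h.1) - ((pℓ*q - L:ℝ):EReal)) :=
            mul_le_mul_of_nonneg_left (EReal.sub_le_sub (hFY _) le_rfl) (hcpos h)
  · -- right derivative, qb ≤ q
    intro hge
    rw [hqb, EReal.coe_le_coe_iff] at hge
    rw [hRDef, hRDef]
    exact iInf_congr fun h => by rw [hKF q hge, hKF (q + h.1) (by linarith [h.2])]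
  · -- left derivative, 0 < q ≤ qℓ
    intro hle
    rw [hLDef]
    refine le_antisymm (iSup_le fun h => ?_) ?_
    · rw [hK0 q hq.le hle]
      have h1 : (0:EReal) - fconj g (q - h.1) ≤ 0 := by
        have h2 : (0:EReal) - fconj g (q - h.1) ≤ 0 - 0 := EReal.sub_le_sub le_rfl (hknn _)
        simpa using h2
      calc ((h.1⁻¹:ℝ):EReal) * ((0:EReal) - fconj g (q - h.1))
          ≤ ((h.1⁻¹:ℝ):EReal) * 0 := mul_le_mul_of_nonneg_left h1 (hcpos h)
        _ = 0 := mul_zero _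
    · have e : ((q⁻¹:ℝ):EReal) * (fconj g q - fconj g (q - q)) = 0 := by
        rw [hK0 q hq.le hle, show q - q = 0 by ring, hK0 0 le_rfl hql_pos.le]
        simp
      exact le_trans (le_of_eq e.symm) (le_iSup (fun h : {h : ℝ // 0 < h} =>
        ((h.1⁻¹:ℝ):EReal) * (fconj g q - fconj g (q - h.1))) ⟨q, hq⟩)
  · -- left derivative, qℓ < q ≤ qb
    intro hgt hle
    rw [hqb, EReal.coe_le_coe_iff] at hle
    rw [hLDef]
    refine le_antisymm (iSup_le fun h => ?_) ?_
    · rw [hKlin q hgt.le hle]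
      calc ((h.1⁻¹:ℝ):EReal) * (((pℓ*q - L:ℝ):EReal) - fconj g (q - h.1))
          ≤ ((h.1⁻¹:ℝ):EReal) * (((pℓ*q - L:ℝ):EReal) - ((pℓ*(q-h.1) - L:ℝ):EReal)) :=
            mul_le_mul_of_nonneg_left (EReal.sub_le_sub le_rfl (hFY _)) (hcpos h)
        _ = ((h.1⁻¹ * ((pℓ*q - L) - (pℓ*(q-h.1) - L)):ℝ):EReal) := hcoesub _ _ _
        _ ≤ (pℓ:EReal) := by
            apply EReal.coe_le_coe_iff.mpr
            apply le_of_eq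
            have hne : h.1 ≠ 0 := ne_of_gt h.2
            field_simp
            ring
    · have hne : q - qℓ ≠ 0 := ne_of_gt (sub_pos.mpr hgt)
      have e : (((q - qℓ)⁻¹:ℝ):EReal) * (fconj g q - fconj g (q - (q - qℓ))) = (pℓ:EReal) := by
        rw [show q - (q - qℓ) = qℓ by ring, hK0 qℓ hql_pos.le le_rfl,
          hKlin q hgt.le hle, sub_zero, ← EReal.coe_mul]
        have e2 : (q - qℓ)⁻¹ * (pℓ*q - L) = pℓ := by
          rw [← hqlpl]; field_simp
        exact_mod_cast e2
      exact le_trans (le_of_eq e.symm) (le_iSup (fun h : {h : ℝ // 0 < h} =>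
        ((h.1⁻¹:ℝ):EReal) * (fconj g q - fconj g (q - h.1))) ⟨q - qℓ, sub_pos.mpr hgt⟩)
  · -- left derivative, qb < q
    intro hgt
    rw [hqb, EReal.coe_lt_coe_iff] at hgt
    have hKq : fconj g q = fconj f q := hKF q hgt.le
    have hKtop : fconj g q ≠ ⊤ :=
      ne_top_of_le_ne_top (EReal.coe_ne_top q) ((hKleF q).trans (hFle q hq.le))
    set A : ℝ := (fconj g q).toReal with hAdef
    have hA : fconj g q = (A:EReal) := (EReal.coe_toReal hKtop (ne_bot_of_nonneg' (hknn q))).symm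
    have hAge : pℓ * q - L ≤ A := by
      have := hFY q
      rw [hA, EReal.coe_le_coe_iff] at this
      exact this
    rw [hLDef, hLDef]
    refine le_antisymm (iSup_le fun h => ?_) (iSup_le fun h => ?_)
    · rcases le_or_gt h.1 (q - qb) with hcase | hcase
      · refine le_trans (le_of_eq ?_) (le_iSup _ h)
        rw [hKF q hgt.le, hKF (q - h.1) (by linarith)]
      · have hh0 : (0:ℝ) < q - qb := sub_pos.mpr hgt
        refine le_trans ?_ (le_iSup _ ⟨q - qb, hh0⟩)
        have e2 : fconj f qb = ((pℓ*qb - L:ℝ):EReal) := by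
          rw [← hKF qb le_rfl]
          exact hKlin qb hql_le_qb le_rfl
        have hBge : pℓ * (q - qb) ≤ A - (pℓ*qb - L) := by nlinarith
        calc ((h.1⁻¹:ℝ):EReal) * (fconj g q - fconj g (q - h.1))
            ≤ ((h.1⁻¹:ℝ):EReal) * (((A:ℝ):EReal) - ((pℓ*(q-h.1) - L:ℝ):EReal)) := by
              rw [hA]
              exact mul_le_mul_of_nonneg_left (EReal.sub_le_sub le_rfl (hFY _)) (hcpos h)
          _ = ((h.1⁻¹ * (A - (pℓ*(q-h.1) - L)) : ℝ):EReal) := hcoesub _ _ _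
          _ ≤ (((q - qb)⁻¹ * (A - (pℓ*qb - L)) : ℝ):EReal) := by
              apply EReal.coe_le_coe_iff.mpr
              rw [show h.1⁻¹ * (A - (pℓ*(q-h.1) - L)) = (A - (pℓ*(q-h.1) - L))/h.1 by ring,
                show (q - qb)⁻¹ * (A - (pℓ*qb - L)) = (A - (pℓ*qb - L))/(q - qb) by ring,
                div_le_div_iff₀ h.2 hh0]
              nlinarith [mul_nonneg (sub_nonneg.mpr hBge) (le_of_lt (sub_pos.mpr hcase))]
          _ = (((q - qb)⁻¹:ℝ):EReal) * (fconj f q - fconj f (q - (q - qb))) := by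
              rw [show q - (q - qb) = qb by ring, e2, ← hKq, hA, hcoesub]
    · refine le_trans ?_ (le_iSup _ h)
      rw [← hKq]
      exact mul_le_mul_of_nonneg_left (EReal.sub_le_sub le_rfl (hKleF _)) (hcpos h)
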